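/- In the power series ring in t over the field ℚ(X) of rational functions, for every integer N ≥ 1, the coefficient of t^N in the finite product Π_{i=1}^{N} (1−t^i)² · (1 − (X + X⁻¹)·t^i + t^{2i})⁻¹ (each factor 1 − (X+X⁻¹)t^i + t^{2i} has constant term 1, hence is invertible) equals C_N(X)/X^N. Equivalently, as formal power series, 1 + Σ_{n≥1} (C_n(X)/X^n)·t^n = Π_{i≥1} (1−t^i)²/(1−(X+X⁻¹)t^i + t^{2i}). -/

import Mathlib

/-- The coefficients `c_{n,i}` from the paper. -/
def cCoeff (n i : ℕ) : ℤ :=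
  if i = 0 then
    ∑ k ∈ Finset.Icc 1 (2 * n), if 2 * n = k * (k + 1) then 2 * (-1 : ℤ) ^ k else 0
  else
    ∑ k ∈ Finset.Icc 1 (2 * n),
      ((if 2 * n = k * (k + 2 * i + 1) then (-1 : ℤ) ^ k else 0) +
        (if 2 * n = k * (k + 2 * i - 1) then (-1 : ℤ) ^ (k - 1) else 0))

/-- The polynomial `C_n(X) = c_{n,0} X^n + ∑_{i=1}^n c_{n,i} (X^{n+i} + X^{n-i}) ∈ ℤ[X]`. -/
noncomputable def Cpoly (n : ℕ) : Polynomial ℤ :=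
  Polynomial.C (cCoeff n 0) * Polynomial.X ^ n +
    ∑ i ∈ Finset.Icc 1 n,
      Polynomial.C (cCoeff n i) * (Polynomial.X ^ (n + i) + Polynomial.X ^ (n - i))




namespace CrankAux

open Finset

/-- triangular numbers -/
def tnum : ℕ → ℕ
  | 0 => 0
  | k + 1 => tnum k + (k + 1)

lemma tnum_two (k : ℕ) : 2 * tnum k = k * (k + 1) := by
  induction k with
  | zero => rfl
  | succ k ih => simp only [tnum]; ring_nf; ring_nf at ih; omega

lemma tnum_mono : Monotone tnum := by
  apply monotone_nat_of_le_succ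
  intro n; simp [tnum]

lemma tnum_succ (i : ℕ) (hi : 1 ≤ i) : tnum (i - 1) + i = tnum i := by
  obtain ⟨a, rfl⟩ : ∃ a, i = a + 1 := ⟨i - 1, by omega⟩
  simp [tnum]

lemma sum_Icc_id (c : ℕ) : ∑ j ∈ Icc 1 c, j = tnum c := by
  induction c with
  | zero => rfl
  | succ c ih => rw [Finset.sum_Icc_succ_top (by omega)]; simp [tnum, ih]

section Defs

variable {T : Type*} [CommRing T] (v z : T) (M : ℕ)

/-- window product `∏_{s=a}^{b} (1 - v^s)` -/
def pw (a b : ℕ) : T := ∏ s ∈ Icc a b, (1 - v ^ s)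

def Etop : T := ∏ j ∈ Icc 1 M, (1 - v ^ j * z)

def Ebot : T := ∏ j ∈ Icc 1 M, (z - v ^ j)

def EtopSkip (i : ℕ) : T := ∏ j ∈ Icc 1 M \ {i}, (1 - v ^ j * z)

def EbotSkip (i : ℕ) : T := ∏ j ∈ Icc 1 M \ {i}, (z - v ^ j)

def aA (i : ℕ) : T :=
  (-1) ^ (i - 1) * v ^ tnum (i - 1) * (1 - v ^ i) * pw v (M - i + 1) M * pw v (M + i + 1) (2 * M)

def lhs : T := ∑ i ∈ Icc 1 M, aA v M i *
  (EtopSkip v z M i * Ebot v z M + z * (Etop v z M * EbotSkip v z M i)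
    - Etop v z M * Ebot v z M)

def rhs : T := pw v 1 M * pw v 1 (2 * M) * z ^ M

variable {T' : Type*} [CommRing T'] (f : T →+* T')

lemma map_pw (a b : ℕ) : f (pw v a b) = pw (f v) a b := by
  simp [pw, map_prod]

lemma map_aA (i : ℕ) : f (aA v M i) = aA (f v) M i := by
  simp [aA, map_pw]

lemma map_lhs : f (lhs v z M) = lhs (f v) (f z) M := by
  simp [lhs, Etop, Ebot, EtopSkip, EbotSkip, map_aA, map_pw]

lemma map_rhs : f (rhs v z M) = rhs (f v) (f z) M := by
  simp [rhs, map_pw]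

/-- telescoping -/
lemma pw_mul_pw (a b : ℕ) (hab : a ≤ b) : pw v 1 a * pw v (a + 1) b = pw v 1 b := by
  have h1 : ∀ n : ℕ, Icc 1 n = Ioc 0 n := by intro n; ext j; simp; omega
  have h2 : Icc (a + 1) b = Ioc a b := by ext j; simp
  unfold pw
  rw [h1, h1, h2]
  exact Finset.prod_Ioc_consecutive _ (by omega) hab

lemma pw_succ_top (a : ℕ) : pw v 1 (a + 1) = pw v 1 a * (1 - v ^ (a + 1)) := by
  rw [pw, pw, Finset.prod_Icc_succ_top (by omega)]

/-- window shift -/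
lemma prod_shift (d c : ℕ) : ∏ j ∈ Icc 1 c, (1 - v ^ (j + d)) = pw v (d + 1) (d + c) := by
  rw [pw]
  apply Finset.prod_nbij' (fun j => j + d) (fun s => s - d) <;>
    (intros; simp_all; try omega)

/-- reflection -/
lemma prod_reflect (c : ℕ) : ∏ j ∈ Icc 1 c, (1 - v ^ (c + 1 - j)) = pw v 1 c := by
  rw [pw]
  apply Finset.prod_nbij' (fun j => c + 1 - j) (fun s => c + 1 - s) <;>
    (intros; simp_all; try omega)

end Defs


section FieldEval
variable {F : Type*} [Field F] {u : F} (hu : u ≠ 0)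

lemma Icc_sdiff (a c : ℕ) :
    Icc 1 (a + 1 + c) \ {a + 1} = Icc 1 a ∪ Icc (a + 2) (a + 1 + c) := by
  ext j; simp; omega

lemma Icc_disj (a c : ℕ) : Disjoint (Icc 1 a) (Icc (a + 2) (a + 1 + c)) := by
  rw [Finset.disjoint_left]; intro j hj hj'; simp at hj hj'; omega

include hu

lemma hy (n : ℕ) : u ^ n * (u ^ n)⁻¹ = 1 := mul_inv_cancel₀ (pow_ne_zero _ hu)

lemma part1_neg (a : ℕ) :
    ∏ j ∈ Icc 1 a, (1 - u ^ j * (u ^ (a + 1))⁻¹) =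
      (-1) ^ a * u ^ tnum a * ((u ^ (a + 1))⁻¹) ^ a * pw u 1 a := by
  have step : ∀ j ∈ Icc 1 a, (1 : F) - u ^ j * (u ^ (a + 1))⁻¹ =
      ((-1) * (u ^ j * (u ^ (a + 1))⁻¹)) * (1 - u ^ (a + 1 - j)) := by
    intro j hj
    simp at hj
    have e1 : u ^ j * u ^ (a + 1 - j) = u ^ (a + 1) := by
      rw [← pow_add]; congr 1; omega
    calc (1 : F) - u ^ j * (u ^ (a + 1))⁻¹
        = u ^ (a + 1) * (u ^ (a + 1))⁻¹ - u ^ j * (u ^ (a + 1))⁻¹ := by rw [hy hu]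
      _ = u ^ j * u ^ (a + 1 - j) * (u ^ (a + 1))⁻¹ - u ^ j * (u ^ (a + 1))⁻¹ := by rw [e1]
      _ = ((-1) * (u ^ j * (u ^ (a + 1))⁻¹)) * (1 - u ^ (a + 1 - j)) := by ring
  rw [Finset.prod_congr rfl step, Finset.prod_mul_distrib, Finset.prod_mul_distrib,
    Finset.prod_mul_distrib, Finset.prod_const, Finset.prod_const, Finset.prod_pow_eq_pow_sum,
    sum_Icc_id, prod_reflect, Nat.card_Icc]
  simp only [inv_pow, add_tsub_cancel_right]
  ring

lemma part2_neg (a c : ℕ) :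
    ∏ j ∈ Icc (a + 2) (a + 1 + c), (1 - u ^ j * (u ^ (a + 1))⁻¹) = pw u 1 c := by
  have step : ∀ j ∈ Icc (a + 2) (a + 1 + c), (1 : F) - u ^ j * (u ^ (a + 1))⁻¹ =
      1 - u ^ (j - (a + 1)) := by
    intro j hj
    simp at hj
    have e1 : u ^ j = u ^ (j - (a + 1)) * u ^ (a + 1) := by
      rw [← pow_add]; congr 1; omega
    rw [e1, mul_assoc, hy hu, mul_one]
  rw [Finset.prod_congr rfl step, pw]
  apply Finset.prod_nbij' (fun j => j - (a + 1)) (fun s => s + (a + 1)) <;>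
    (intros; simp_all; try omega)

lemma ebot_neg (a c : ℕ) :
    Ebot u ((u ^ (a + 1))⁻¹) (a + 1 + c) =
      ((u ^ (a + 1))⁻¹) ^ (a + 1 + c) * pw u (a + 2) (a + 1 + (a + 1 + c)) := by
  unfold Ebot
  have step : ∀ j ∈ Icc 1 (a + 1 + c), (u ^ (a + 1))⁻¹ - u ^ j =
      (u ^ (a + 1))⁻¹ * (1 - u ^ (j + (a + 1))) := by
    intro j hj
    have e1 : u ^ (j + (a + 1)) = u ^ j * u ^ (a + 1) := by rw [← pow_add]
    rw [mul_sub, mul_one, e1]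
    have : (u ^ (a + 1))⁻¹ * (u ^ j * u ^ (a + 1)) = u ^ j * (u ^ (a + 1) * (u ^ (a + 1))⁻¹) := by
      ring
    rw [this, hy hu, mul_one]
  rw [Finset.prod_congr rfl step, Finset.prod_mul_distrib, Finset.prod_const, Nat.card_Icc,
    prod_shift]
  simp

lemma part1_pos (a : ℕ) :
    ∏ j ∈ Icc 1 a, (u ^ (a + 1) - u ^ j) = (-1) ^ a * u ^ tnum a * pw u 1 a := by
  have step : ∀ j ∈ Icc 1 a, u ^ (a + 1) - u ^ j =
      ((-1) * u ^ j) * (1 - u ^ (a + 1 - j)) := by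
    intro j hj
    simp at hj
    have e1 : u ^ j * u ^ (a + 1 - j) = u ^ (a + 1) := by
      rw [← pow_add]; congr 1; omega
    calc u ^ (a + 1) - u ^ j = u ^ j * u ^ (a + 1 - j) - u ^ j := by rw [e1]
      _ = ((-1) * u ^ j) * (1 - u ^ (a + 1 - j)) := by ring
  rw [Finset.prod_congr rfl step, Finset.prod_mul_distrib, Finset.prod_mul_distrib,
    Finset.prod_const, Finset.prod_pow_eq_pow_sum, sum_Icc_id, prod_reflect, Nat.card_Icc]
  simp

lemma part2_pos (a c : ℕ) :
    ∏ j ∈ Icc (a + 2) (a + 1 + c), (u ^ (a + 1) - u ^ j) = (u ^ (a + 1)) ^ c * pw u 1 c := by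
  have step : ∀ j ∈ Icc (a + 2) (a + 1 + c), u ^ (a + 1) - u ^ j =
      u ^ (a + 1) * (1 - u ^ (j - (a + 1))) := by
    intro j hj
    simp at hj
    have e1 : u ^ j = u ^ (a + 1) * u ^ (j - (a + 1)) := by
      rw [← pow_add]; congr 1; omega
    rw [mul_sub, mul_one, ← e1]
  rw [Finset.prod_congr rfl step, Finset.prod_mul_distrib, Finset.prod_const, Nat.card_Icc]
  have : a + 1 + c + 1 - (a + 2) = c := by omega
  rw [this]
  congr 1
  rw [pw]
  apply Finset.prod_nbij' (fun j => j - (a + 1)) (fun s => s + (a + 1)) <;>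
    (intros; simp_all; try omega)

lemma etop_pos (a c : ℕ) :
    Etop u (u ^ (a + 1)) (a + 1 + c) = pw u (a + 2) (a + 1 + (a + 1 + c)) := by
  unfold Etop
  have step : ∀ j ∈ Icc 1 (a + 1 + c), (1 : F) - u ^ j * u ^ (a + 1) =
      1 - u ^ (j + (a + 1)) := by
    intro j hj
    rw [← pow_add]
  rw [Finset.prod_congr rfl step, prod_shift]

end FieldEval


section FieldEval2
variable {F : Type*} [Field F] {u : F} (hu : u ≠ 0)

lemma pw_glue (v : F) (x y b : ℕ) (hxy : y = x + 1) (hb : x ≤ b) :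
    pw v 1 x * pw v y b = pw v 1 b := by
  subst hxy; exact pw_mul_pw v x b hb

include hu

lemma eval_zero (M : ℕ) (hM : 1 ≤ M) : lhs u (0 : F) M = rhs u 0 M := by
  have h1 : ∀ i, EtopSkip u (0 : F) M i = 1 := by
    intro i; unfold EtopSkip; apply Finset.prod_eq_one; intros; simp
  have h2 : Etop u (0 : F) M = 1 := by
    unfold Etop; apply Finset.prod_eq_one; intros; simp
  unfold lhs rhs
  rw [zero_pow (by omega)]
  simp [h1, h2]

lemma eval_neg (a c : ℕ) :
    lhs u ((u ^ (a + 1))⁻¹) (a + 1 + c) = rhs u ((u ^ (a + 1))⁻¹) (a + 1 + c) := by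
  have h0 : (1 : F) - u ^ (a + 1) * (u ^ (a + 1))⁻¹ = 0 := by rw [hy hu]; ring
  have hmem : a + 1 ∈ Icc 1 (a + 1 + c) := by simp
  have hEtop : Etop u ((u ^ (a + 1))⁻¹) (a + 1 + c) = 0 := Finset.prod_eq_zero hmem h0
  have hskip : ∀ i, i ≠ a + 1 → EtopSkip u ((u ^ (a + 1))⁻¹) (a + 1 + c) i = 0 := by
    intro i hi
    apply Finset.prod_eq_zero (i := a + 1) _ h0
    simp only [Finset.mem_sdiff, Finset.mem_singleton, hmem, true_and]
    exact fun h => absurd h.symm hi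
  have h1 : ∀ b ∈ Icc 1 (a + 1 + c), b ≠ a + 1 → aA u (a + 1 + c) b *
      (EtopSkip u ((u ^ (a + 1))⁻¹) (a + 1 + c) b * Ebot u ((u ^ (a + 1))⁻¹) (a + 1 + c) +
        (u ^ (a + 1))⁻¹ * (Etop u ((u ^ (a + 1))⁻¹) (a + 1 + c) *
          EbotSkip u ((u ^ (a + 1))⁻¹) (a + 1 + c) b)
        - Etop u ((u ^ (a + 1))⁻¹) (a + 1 + c) * Ebot u ((u ^ (a + 1))⁻¹) (a + 1 + c)) = 0 := by
    intro b _ hbne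
    rw [hEtop, hskip b hbne]
    ring
  unfold lhs
  rw [Finset.sum_eq_single (a + 1) h1 (fun h => absurd hmem h)]
  have hmain : aA u (a + 1 + c) (a + 1) *
      (EtopSkip u ((u ^ (a + 1))⁻¹) (a + 1 + c) (a + 1) * Ebot u ((u ^ (a + 1))⁻¹) (a + 1 + c) +
        (u ^ (a + 1))⁻¹ * (Etop u ((u ^ (a + 1))⁻¹) (a + 1 + c) *
          EbotSkip u ((u ^ (a + 1))⁻¹) (a + 1 + c) (a + 1))
        - Etop u ((u ^ (a + 1))⁻¹) (a + 1 + c) * Ebot u ((u ^ (a + 1))⁻¹) (a + 1 + c)) =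
      aA u (a + 1 + c) (a + 1) *
      (EtopSkip u ((u ^ (a + 1))⁻¹) (a + 1 + c) (a + 1) *
        Ebot u ((u ^ (a + 1))⁻¹) (a + 1 + c)) := by
    rw [hEtop]; ring
  rw [hmain]
  have hskip1 : EtopSkip u ((u ^ (a + 1))⁻¹) (a + 1 + c) (a + 1) =
      ((-1) ^ a * u ^ tnum a * ((u ^ (a + 1))⁻¹) ^ a * pw u 1 a) * pw u 1 c := by
    unfold EtopSkip
    rw [Icc_sdiff, Finset.prod_union (Icc_disj a c), part1_neg hu, part2_neg hu]
  have hebot : Ebot u ((u ^ (a + 1))⁻¹) (a + 1 + c) =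
      ((u ^ (a + 1))⁻¹) ^ (a + 1 + c) * pw u (a + 2) (2 * a + c + 2) := by
    rw [ebot_neg hu, show a + 1 + (a + 1 + c) = 2 * a + c + 2 from by omega]
  have haA : aA u (a + 1 + c) (a + 1) =
      (-1) ^ a * u ^ tnum a * (1 - u ^ (a + 1)) * pw u (c + 1) (a + 1 + c) *
        pw u (2 * a + c + 3) (2 * a + 2 * c + 2) := by
    unfold aA
    rw [show a + 1 - 1 = a from rfl, show a + 1 + c - (a + 1) + 1 = c + 1 from by omega,
      show a + 1 + c + (a + 1) + 1 = 2 * a + c + 3 from by omega,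
      show 2 * (a + 1 + c) = 2 * a + 2 * c + 2 from by omega]
  have hsc : (-1 : F) ^ a * (-1) ^ a = 1 := by rw [← mul_pow]; norm_num
  have hupow : u ^ tnum a * u ^ tnum a * ((u ^ (a + 1))⁻¹) ^ a = 1 := by
    have e : ((u ^ (a + 1)) ^ a : F) = u ^ (tnum a + tnum a) := by
      rw [← pow_mul]; congr 1
      have h2 := tnum_two a
      have h3 : a * (a + 1) = (a + 1) * a := by ring
      omega
    rw [inv_pow, e, ← pow_add, mul_inv_cancel₀ (pow_ne_zero _ hu)]
  have hq : pw u 1 c * pw u (c + 1) (a + 1 + c) = pw u 1 (a + 1 + c) :=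
    pw_glue u c (c + 1) (a + 1 + c) rfl (by omega)
  have hP : ((1 - u ^ (a + 1)) * pw u 1 a) * pw u (a + 2) (2 * a + c + 2) *
      pw u (2 * a + c + 3) (2 * a + 2 * c + 2) = pw u 1 (2 * a + 2 * c + 2) := by
    have s1 : (1 - u ^ (a + 1)) * pw u 1 a = pw u 1 (a + 1) := by
      rw [mul_comm]; exact (pw_succ_top u a).symm
    rw [s1, pw_glue u (a + 1) (a + 2) (2 * a + c + 2) rfl (by omega),
      pw_glue u (2 * a + c + 2) (2 * a + c + 3) (2 * a + 2 * c + 2) rfl (by omega)]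
  rw [haA, hskip1, hebot]
  unfold rhs
  rw [show 2 * (a + 1 + c) = 2 * a + 2 * c + 2 from by omega]
  calc (-1) ^ a * u ^ tnum a * (1 - u ^ (a + 1)) * pw u (c + 1) (a + 1 + c) *
        pw u (2 * a + c + 3) (2 * a + 2 * c + 2) *
        ((-1) ^ a * u ^ tnum a * ((u ^ (a + 1))⁻¹) ^ a * pw u 1 a * pw u 1 c *
          (((u ^ (a + 1))⁻¹) ^ (a + 1 + c) * pw u (a + 2) (2 * a + c + 2)))
      = ((-1 : F) ^ a * (-1) ^ a) * (u ^ tnum a * u ^ tnum a * ((u ^ (a + 1))⁻¹) ^ a) *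
        (pw u 1 c * pw u (c + 1) (a + 1 + c)) *
        (((1 - u ^ (a + 1)) * pw u 1 a) * pw u (a + 2) (2 * a + c + 2) *
          pw u (2 * a + c + 3) (2 * a + 2 * c + 2)) *
        ((u ^ (a + 1))⁻¹) ^ (a + 1 + c) := by ring
    _ = pw u 1 (a + 1 + c) * pw u 1 (2 * a + 2 * c + 2) * ((u ^ (a + 1))⁻¹) ^ (a + 1 + c) := by
        rw [hsc, hupow, hq, hP]; ring

lemma eval_pos (a c : ℕ) :
    lhs u (u ^ (a + 1)) (a + 1 + c) = rhs u (u ^ (a + 1)) (a + 1 + c) := by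
  have h0 : u ^ (a + 1) - u ^ (a + 1) = (0 : F) := sub_self _
  have hmem : a + 1 ∈ Icc 1 (a + 1 + c) := by simp
  have hEbot : Ebot u (u ^ (a + 1)) (a + 1 + c) = 0 := Finset.prod_eq_zero hmem h0
  have hbskip : ∀ i, i ≠ a + 1 → EbotSkip u (u ^ (a + 1)) (a + 1 + c) i = 0 := by
    intro i hi
    apply Finset.prod_eq_zero (i := a + 1) _ h0
    simp only [Finset.mem_sdiff, Finset.mem_singleton, hmem, true_and]
    exact fun h => absurd h.symm hi
  have h1 : ∀ b ∈ Icc 1 (a + 1 + c), b ≠ a + 1 → aA u (a + 1 + c) b *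
      (EtopSkip u (u ^ (a + 1)) (a + 1 + c) b * Ebot u (u ^ (a + 1)) (a + 1 + c) +
        u ^ (a + 1) * (Etop u (u ^ (a + 1)) (a + 1 + c) *
          EbotSkip u (u ^ (a + 1)) (a + 1 + c) b)
        - Etop u (u ^ (a + 1)) (a + 1 + c) * Ebot u (u ^ (a + 1)) (a + 1 + c)) = 0 := by
    intro b _ hbne
    rw [hEbot, hbskip b hbne]
    ring
  unfold lhs
  rw [Finset.sum_eq_single (a + 1) h1 (fun h => absurd hmem h)]
  have hmain : aA u (a + 1 + c) (a + 1) *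
      (EtopSkip u (u ^ (a + 1)) (a + 1 + c) (a + 1) * Ebot u (u ^ (a + 1)) (a + 1 + c) +
        u ^ (a + 1) * (Etop u (u ^ (a + 1)) (a + 1 + c) *
          EbotSkip u (u ^ (a + 1)) (a + 1 + c) (a + 1))
        - Etop u (u ^ (a + 1)) (a + 1 + c) * Ebot u (u ^ (a + 1)) (a + 1 + c)) =
      aA u (a + 1 + c) (a + 1) * (u ^ (a + 1) * (Etop u (u ^ (a + 1)) (a + 1 + c) *
          EbotSkip u (u ^ (a + 1)) (a + 1 + c) (a + 1))) := by
    rw [hEbot]; ring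
  rw [hmain]
  have hetop : Etop u (u ^ (a + 1)) (a + 1 + c) = pw u (a + 2) (2 * a + c + 2) := by
    rw [etop_pos hu, show a + 1 + (a + 1 + c) = 2 * a + c + 2 from by omega]
  have hbskip1 : EbotSkip u (u ^ (a + 1)) (a + 1 + c) (a + 1) =
      ((-1) ^ a * u ^ tnum a * pw u 1 a) * ((u ^ (a + 1)) ^ c * pw u 1 c) := by
    unfold EbotSkip
    rw [Icc_sdiff, Finset.prod_union (Icc_disj a c), part1_pos hu, part2_pos hu]
  have haA : aA u (a + 1 + c) (a + 1) =
      (-1) ^ a * u ^ tnum a * (1 - u ^ (a + 1)) * pw u (c + 1) (a + 1 + c) *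
        pw u (2 * a + c + 3) (2 * a + 2 * c + 2) := by
    unfold aA
    rw [show a + 1 - 1 = a from rfl, show a + 1 + c - (a + 1) + 1 = c + 1 from by omega,
      show a + 1 + c + (a + 1) + 1 = 2 * a + c + 3 from by omega,
      show 2 * (a + 1 + c) = 2 * a + 2 * c + 2 from by omega]
  have hsc : (-1 : F) ^ a * (-1) ^ a = 1 := by rw [← mul_pow]; norm_num
  have hupow : u ^ tnum a * u ^ tnum a * (u ^ (a + 1) * (u ^ (a + 1)) ^ c) =
      (u ^ (a + 1)) ^ (a + 1 + c) := by
    have e1 : (u ^ (a + 1) * (u ^ (a + 1)) ^ c : F) = (u ^ (a + 1)) ^ (c + 1) := by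
      rw [pow_succ]; ring
    rw [e1, ← pow_mul, ← pow_mul, ← pow_add, ← pow_add]
    congr 1
    have h2 := tnum_two a
    have e3 : (a + 1) * (c + 1) = a * c + a + c + 1 := by ring
    have e4 : (a + 1) * (a + 1 + c) = a * a + a * c + 2 * a + c + 1 := by ring
    have e5 : a * (a + 1) = a * a + a := by ring
    omega
  have hq : pw u 1 c * pw u (c + 1) (a + 1 + c) = pw u 1 (a + 1 + c) :=
    pw_glue u c (c + 1) (a + 1 + c) rfl (by omega)
  have hP : ((1 - u ^ (a + 1)) * pw u 1 a) * pw u (a + 2) (2 * a + c + 2) *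
      pw u (2 * a + c + 3) (2 * a + 2 * c + 2) = pw u 1 (2 * a + 2 * c + 2) := by
    have s1 : (1 - u ^ (a + 1)) * pw u 1 a = pw u 1 (a + 1) := by
      rw [mul_comm]; exact (pw_succ_top u a).symm
    rw [s1, pw_glue u (a + 1) (a + 2) (2 * a + c + 2) rfl (by omega),
      pw_glue u (2 * a + c + 2) (2 * a + c + 3) (2 * a + 2 * c + 2) rfl (by omega)]
  rw [haA, hetop, hbskip1]
  unfold rhs
  rw [show 2 * (a + 1 + c) = 2 * a + 2 * c + 2 from by omega]
  calc (-1) ^ a * u ^ tnum a * (1 - u ^ (a + 1)) * pw u (c + 1) (a + 1 + c) *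
        pw u (2 * a + c + 3) (2 * a + 2 * c + 2) *
        (u ^ (a + 1) * (pw u (a + 2) (2 * a + c + 2) *
          ((-1) ^ a * u ^ tnum a * pw u 1 a * ((u ^ (a + 1)) ^ c * pw u 1 c))))
      = ((-1 : F) ^ a * (-1) ^ a) *
        (u ^ tnum a * u ^ tnum a * (u ^ (a + 1) * (u ^ (a + 1)) ^ c)) *
        (pw u 1 c * pw u (c + 1) (a + 1 + c)) *
        (((1 - u ^ (a + 1)) * pw u 1 a) * pw u (a + 2) (2 * a + c + 2) *
          pw u (2 * a + c + 3) (2 * a + 2 * c + 2)) := by ring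
    _ = pw u 1 (a + 1 + c) * pw u 1 (2 * a + 2 * c + 2) * (u ^ (a + 1)) ^ (a + 1 + c) := by
        rw [hsc, hupow, hq, hP]; ring

end FieldEval2

end CrankAux

namespace CrankAux
open Finset Polynomial

section Diamond
variable {F : Type*} [Field F] {u : F}

lemma wb_cast_add (a b : ℕ) : ((a : WithBot ℕ)) + (b : WithBot ℕ) = ((a + b : ℕ) : WithBot ℕ) := by
  exact_mod_cast rfl

lemma wb_cast_le {a b : ℕ} (h : a ≤ b) : ((a : WithBot ℕ)) ≤ (b : WithBot ℕ) := by
  exact_mod_cast h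

lemma deg_prod_le_card (s : Finset ℕ) (f : ℕ → Polynomial F)
    (h : ∀ j ∈ s, (f j).degree ≤ 1) : (∏ j ∈ s, f j).degree ≤ (s.card : ℕ) := by
  calc (∏ j ∈ s, f j).degree ≤ ∑ j ∈ s, (f j).degree := Polynomial.degree_prod_le s f
    _ ≤ ∑ _j ∈ s, (1 : WithBot ℕ) := Finset.sum_le_sum h
    _ = (s.card : ℕ) := by rw [Finset.sum_const]; simp

lemma deg_factor1 (c : F) : ((1 : Polynomial F) - C c * X).degree ≤ 1 := by
  refine le_trans (Polynomial.degree_sub_le _ _) (max_le ?_ ?_)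
  · rw [Polynomial.degree_one]; exact zero_le_one
  · exact Polynomial.degree_C_mul_X_le c

lemma deg_factor2 (c : F) : ((X : Polynomial F) - C c).degree ≤ 1 :=
  le_of_eq (Polynomial.degree_X_sub_C c)

theorem diamond_field (hu : u ≠ 0) (hu1 : ∀ n : ℕ, n ≠ 0 → u ^ n ≠ 1) (M : ℕ) (hM : 1 ≤ M) :
    lhs (Polynomial.C u) (Polynomial.X) M = rhs (Polynomial.C u) Polynomial.X M := by
  classical
  set v : ℤ → F := fun n => if n = 0 then 0 else u ^ n with hv
  have hcard : (Finset.Icc (-(M : ℤ)) M).card = 2 * M + 1 := by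
    rw [Int.card_Icc]; omega
  have hzne : ∀ n : ℤ, u ^ n ≠ 0 := fun n => zpow_ne_zero n hu
  have hzone : ∀ n : ℤ, n ≠ 0 → u ^ n ≠ 1 := by
    intro n hn h1
    rcases lt_or_gt_of_ne hn with hneg | hpos
    · have h0 : u ^ (-n) = 1 := by rw [zpow_neg, h1, inv_one]
      have h2 : u ^ (-n).toNat = 1 := by
        rw [← zpow_natCast, Int.toNat_of_nonneg (by omega)]; exact h0
      exact hu1 (-n).toNat (by omega) h2
    · have h2 : u ^ n.toNat = 1 := by
        rw [← zpow_natCast, Int.toNat_of_nonneg (by omega)]; exact h1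
      exact hu1 n.toNat (by omega) h2
  have hinj : Set.InjOn v (Finset.Icc (-(M : ℤ)) M) := by
    intro a _ b _ hab
    by_contra hne
    simp only [hv] at hab
    by_cases ha : a = 0
    · subst ha
      rw [if_pos rfl, if_neg (Ne.symm hne)] at hab
      exact hzne b hab.symm
    · by_cases hb : b = 0
      · subst hb
        rw [if_neg ha, if_pos rfl] at hab
        exact hzne a hab
      · rw [if_neg ha, if_neg hb] at hab
        have : u ^ (a - b) = 1 := by
          rw [zpow_sub₀ hu, hab, div_self (hzne b)]
        exact hzone (a - b) (by omega) this
  have hdeg_lhs : (lhs (Polynomial.C u) (Polynomial.X) M).degree < ((2 * M + 1 : ℕ) : WithBot ℕ) := by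
    have hterm : ∀ i ∈ Icc 1 M, (aA (Polynomial.C u) M i *
        (EtopSkip (Polynomial.C u) X M i * Ebot (Polynomial.C u) X M +
          X * (Etop (Polynomial.C u) X M * EbotSkip (Polynomial.C u) X M i)
          - Etop (Polynomial.C u) X M * Ebot (Polynomial.C u) X M)).degree
        ≤ ((2 * M : ℕ) : WithBot ℕ) := by
      intro i hi
      simp only [Finset.mem_Icc] at hi
      have hcs : (Icc 1 M \ {i}).card = M - 1 := by
        rw [Finset.card_sdiff_of_subset (by simp [Finset.singleton_subset_iff]; omega)]
        simp [Nat.card_Icc]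
      have hfacts : ∀ j ∈ Icc 1 M, ((1 : Polynomial F) - (Polynomial.C u) ^ j * X).degree ≤ 1 := by
        intro j _
        rw [← Polynomial.C_pow]; exact deg_factor1 _
      have hfacts2 : ∀ j ∈ Icc 1 M, ((X : Polynomial F) - (Polynomial.C u) ^ j).degree ≤ 1 := by
        intro j _
        rw [← Polynomial.C_pow]; exact deg_factor2 _
      have hfactsS : ∀ j ∈ Icc 1 M \ {i}, ((1 : Polynomial F) - (Polynomial.C u) ^ j * X).degree ≤ 1 :=
        fun j hj => hfacts j (Finset.sdiff_subset hj)
      have hfacts2S : ∀ j ∈ Icc 1 M \ {i}, ((X : Polynomial F) - (Polynomial.C u) ^ j).degree ≤ 1 :=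
        fun j hj => hfacts2 j (Finset.sdiff_subset hj)
      have hEtop : (Etop (Polynomial.C u) X M).degree ≤ ((M : ℕ) : WithBot ℕ) := by
        refine le_trans (deg_prod_le_card _ _ hfacts) ?_
        simp [Nat.card_Icc]
      have hEbot : (Ebot (Polynomial.C u) X M).degree ≤ ((M : ℕ) : WithBot ℕ) := by
        refine le_trans (deg_prod_le_card _ _ hfacts2) ?_
        simp [Nat.card_Icc]
      have hEtopS : (EtopSkip (Polynomial.C u) X M i).degree ≤ ((M - 1 : ℕ) : WithBot ℕ) := by
        refine le_trans (deg_prod_le_card _ _ hfactsS) (le_of_eq (by rw [hcs]))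
      have hEbotS : (EbotSkip (Polynomial.C u) X M i).degree ≤ ((M - 1 : ℕ) : WithBot ℕ) := by
        refine le_trans (deg_prod_le_card _ _ hfacts2S) (le_of_eq (by rw [hcs]))
      have haA : (aA (Polynomial.C u) M i).degree ≤ 0 := by
        have e : aA (Polynomial.C u) M i = Polynomial.C (aA u M i) :=
          (map_aA u M (Polynomial.C : F →+* Polynomial F) i).symm
        rw [e]; exact Polynomial.degree_C_le
      have hA : (EtopSkip (Polynomial.C u) X M i * Ebot (Polynomial.C u) X M).degree
          ≤ ((2 * M : ℕ) : WithBot ℕ) := by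
        refine le_trans (Polynomial.degree_mul_le _ _)
          (le_trans (add_le_add hEtopS hEbot) ?_)
        rw [wb_cast_add]; exact wb_cast_le (by omega)
      have hB : (X * (Etop (Polynomial.C u) X M * EbotSkip (Polynomial.C u) X M i)).degree
          ≤ ((2 * M : ℕ) : WithBot ℕ) := by
        refine le_trans (Polynomial.degree_mul_le _ _) ?_
        have h1 : (X : Polynomial F).degree ≤ ((1 : ℕ) : WithBot ℕ) := by
          rw [Polynomial.degree_X]; exact_mod_cast le_rfl
        have h2 : (Etop (Polynomial.C u) X M * EbotSkip (Polynomial.C u) X M i).degree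
            ≤ ((M + (M - 1) : ℕ) : WithBot ℕ) := by
          refine le_trans (Polynomial.degree_mul_le _ _)
            (le_trans (add_le_add hEtop hEbotS) ?_)
          rw [wb_cast_add]
        refine le_trans (add_le_add h1 h2) ?_
        rw [wb_cast_add]; exact wb_cast_le (by omega)
      have hC : (Etop (Polynomial.C u) X M * Ebot (Polynomial.C u) X M).degree
          ≤ ((2 * M : ℕ) : WithBot ℕ) := by
        refine le_trans (Polynomial.degree_mul_le _ _)
          (le_trans (add_le_add hEtop hEbot) ?_)
        rw [wb_cast_add]; exact wb_cast_le (by omega)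
      refine le_trans (Polynomial.degree_mul_le _ _) ?_
      have hS : (EtopSkip (Polynomial.C u) X M i * Ebot (Polynomial.C u) X M +
          X * (Etop (Polynomial.C u) X M * EbotSkip (Polynomial.C u) X M i)
          - Etop (Polynomial.C u) X M * Ebot (Polynomial.C u) X M).degree
          ≤ ((2 * M : ℕ) : WithBot ℕ) :=
        le_trans (Polynomial.degree_sub_le _ _)
          (max_le (le_trans (Polynomial.degree_add_le _ _) (max_le hA hB)) hC)
      calc (aA (Polynomial.C u) M i).degree + _ ≤ 0 + ((2 * M : ℕ) : WithBot ℕ) :=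
            add_le_add haA hS
        _ = ((2 * M : ℕ) : WithBot ℕ) := by rw [zero_add]
    refine lt_of_le_of_lt (le_trans (Polynomial.degree_sum_le _ _) ?_)
      ((by exact_mod_cast (by omega : 2 * M < 2 * M + 1)) :
        ((2 * M : ℕ) : WithBot ℕ) < ((2 * M + 1 : ℕ) : WithBot ℕ))
    exact Finset.sup_le hterm
  have hdeg_rhs : (rhs (Polynomial.C u) (Polynomial.X) M).degree < ((2 * M + 1 : ℕ) : WithBot ℕ) := by
    have e1 : pw (Polynomial.C u) 1 M = Polynomial.C (pw u 1 M) := (map_pw u Polynomial.C 1 M).symm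
    have e2 : pw (Polynomial.C u) 1 (2 * M) = Polynomial.C (pw u 1 (2 * M)) :=
      (map_pw u Polynomial.C 1 (2 * M)).symm
    unfold rhs
    rw [e1, e2, ← Polynomial.C_mul]
    refine lt_of_le_of_lt (Polynomial.degree_mul_le _ _) ?_
    have h1 : (Polynomial.C (pw u 1 M * pw u 1 (2 * M))).degree ≤ 0 := Polynomial.degree_C_le
    have h2 : ((X : Polynomial F) ^ M).degree ≤ ((M : ℕ) : WithBot ℕ) := by
      rw [Polynomial.degree_X_pow]
    refine lt_of_le_of_lt (add_le_add h1 h2) ?_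
    rw [zero_add]
    exact_mod_cast (by omega : M < 2 * M + 1)
  rw [← hcard] at hdeg_lhs hdeg_rhs
  apply Polynomial.eq_of_degrees_lt_of_eval_index_eq (v := v) (Finset.Icc (-(M : ℤ)) M) hinj
    hdeg_lhs hdeg_rhs
  intro i hi
  simp only [Finset.mem_Icc] at hi
  have keyL : ∀ w : F, Polynomial.eval w (lhs (Polynomial.C u) (Polynomial.X) M) = lhs u w M := by
    intro w
    have h := map_lhs (Polynomial.C u) (X : Polynomial F) M (Polynomial.evalRingHom w)
    simpa using h
  have keyR : ∀ w : F, Polynomial.eval w (rhs (Polynomial.C u) (Polynomial.X) M) = rhs u w M := by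
    intro w
    have h := map_rhs (Polynomial.C u) (X : Polynomial F) M (Polynomial.evalRingHom w)
    simpa using h
  rw [keyL, keyR]
  rcases lt_trichotomy i 0 with hlt | heq | hgt
  · have hvi : v i = (u ^ ((-i).toNat))⁻¹ := by
      simp only [hv, if_neg (by omega : i ≠ 0)]
      rw [← zpow_natCast, Int.toNat_of_nonneg (by omega), zpow_neg, inv_inv]
    obtain ⟨a, ha⟩ : ∃ a, (-i).toNat = a + 1 := ⟨(-i).toNat - 1, by omega⟩
    obtain ⟨c, hc⟩ : ∃ c, M = a + 1 + c := ⟨M - (a + 1), by omega⟩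
    rw [hvi, ha, hc]
    exact eval_neg hu a c
  · subst heq
    have hvi : v 0 = 0 := by simp [hv]
    rw [hvi]
    exact eval_zero hu M hM
  · have hvi : v i = u ^ (i.toNat) := by
      simp only [hv, if_neg (by omega : i ≠ 0)]
      rw [← zpow_natCast, Int.toNat_of_nonneg (by omega)]
    obtain ⟨a, ha⟩ : ∃ a, i.toNat = a + 1 := ⟨i.toNat - 1, by omega⟩
    obtain ⟨c, hc⟩ : ∃ c, M = a + 1 + c := ⟨M - (a + 1), by omega⟩
    rw [hvi, ha, hc]
    exact eval_pos hu a c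
end Diamond
end CrankAux

namespace CrankAux
open Finset Polynomial

section Transfer

lemma ratfunc_X_pow_ne_one (n : ℕ) (hn : n ≠ 0) : (RatFunc.X : RatFunc ℚ) ^ n ≠ 1 := by
  intro h
  have h1 : (algebraMap (Polynomial ℚ) (RatFunc ℚ)) (Polynomial.X ^ n) =
      (algebraMap (Polynomial ℚ) (RatFunc ℚ)) 1 := by
    rw [map_pow, RatFunc.algebraMap_X, map_one, h]
  have h2 := RatFunc.algebraMap_injective ℚ h1
  have h3 := congrArg Polynomial.natDegree h2
  simp [Polynomial.natDegree_X_pow] at h3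
  omega

theorem diamond_intpoly (M : ℕ) (hM : 1 ≤ M) :
    lhs (Polynomial.C (Polynomial.X : Polynomial ℤ)) Polynomial.X M
      = rhs (Polynomial.C (Polynomial.X : Polynomial ℤ)) Polynomial.X M := by
  set g : Polynomial ℤ →+* RatFunc ℚ :=
    (algebraMap (Polynomial ℚ) (RatFunc ℚ)).comp (Polynomial.mapRingHom (Int.castRingHom ℚ))
    with hg
  have hginj : Function.Injective g := by
    rw [hg]
    exact (RatFunc.algebraMap_injective ℚ).comp
      (Polynomial.map_injective _ Int.cast_injective)
  have hmapinj : Function.Injective (Polynomial.mapRingHom g) := by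
    intro p q h
    exact Polynomial.map_injective g hginj h
  apply hmapinj
  rw [map_lhs, map_rhs]
  have hX : (Polynomial.mapRingHom g) Polynomial.X = Polynomial.X := by
    simp
  have hCX : (Polynomial.mapRingHom g) (Polynomial.C (Polynomial.X : Polynomial ℤ)) =
      Polynomial.C (RatFunc.X : RatFunc ℚ) := by
    simp only [Polynomial.coe_mapRingHom, Polynomial.map_C]
    congr 1
    rw [hg]
    simp only [RingHom.comp_apply, Polynomial.coe_mapRingHom, Polynomial.map_X]
    exact RatFunc.algebraMap_X
  rw [hX, hCX]
  exact diamond_field RatFunc.X_ne_zero ratfunc_X_pow_ne_one M hM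

noncomputable def ψA : Polynomial ℤ →+* PowerSeries (RatFunc ℚ) :=
  Polynomial.eval₂RingHom (Int.castRingHom (PowerSeries (RatFunc ℚ))) PowerSeries.X

noncomputable def ΨA : Polynomial (Polynomial ℤ) →+* PowerSeries (RatFunc ℚ) :=
  Polynomial.eval₂RingHom ψA (PowerSeries.C (R := RatFunc ℚ) RatFunc.X)

theorem diamond_PS (M : ℕ) (hM : 1 ≤ M) :
    lhs (PowerSeries.X : PowerSeries (RatFunc ℚ)) (PowerSeries.C (R := RatFunc ℚ) RatFunc.X) M
      = rhs (PowerSeries.X : PowerSeries (RatFunc ℚ)) (PowerSeries.C (R := RatFunc ℚ) RatFunc.X) M := by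
  have h := congrArg ΨA (diamond_intpoly M hM)
  rw [map_lhs, map_rhs] at h
  have h1 : ΨA (Polynomial.C (Polynomial.X : Polynomial ℤ)) = PowerSeries.X := by
    show Polynomial.eval₂ ψA _ _ = _
    rw [Polynomial.eval₂_C]
    show Polynomial.eval₂ _ _ _ = _
    rw [Polynomial.eval₂_X]
  have h2 : ΨA Polynomial.X = PowerSeries.C (R := RatFunc ℚ) RatFunc.X := by
    show Polynomial.eval₂ ψA _ _ = _
    rw [Polynomial.eval₂_X]
  rwa [h1, h2] at h

end Transfer
end CrankAux

namespace CrankAux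
open Finset

noncomputable section PartB

local notation "PS" => PowerSeries (RatFunc ℚ)
local notation "XX" => (PowerSeries.X : PowerSeries (RatFunc ℚ))
local notation "zc" => (PowerSeries.C (R := RatFunc ℚ) RatFunc.X)
local notation "Cq" => (PowerSeries.C (R := RatFunc ℚ))

lemma xq_ne : (RatFunc.X : RatFunc ℚ) ≠ 0 := RatFunc.X_ne_zero

/-- geometric series `∑ c^m t^(i m)` -/
def geo (c : RatFunc ℚ) (i : ℕ) : PS :=
  PowerSeries.mk fun n => if i ∣ n then c ^ (n / i) else 0

lemma geo_mul (c : RatFunc ℚ) (i : ℕ) (hi : 1 ≤ i) :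
    (1 - Cq c * PowerSeries.X ^ i) * geo c i = 1 := by
  ext n
  rw [sub_mul, one_mul, map_sub]
  have e0 : Cq c * PowerSeries.X ^ i * geo c i =
      Cq c * (PowerSeries.X ^ i * geo c i) := by ring
  rw [e0, PowerSeries.coeff_C_mul, PowerSeries.coeff_X_pow_mul', PowerSeries.coeff_one]
  by_cases h1 : i ≤ n
  · rw [if_pos h1, geo, PowerSeries.coeff_mk, PowerSeries.coeff_mk]
    have hn0 : ¬ n = 0 := by omega
    rw [if_neg hn0]
    by_cases h2 : i ∣ n
    · obtain ⟨m, rfl⟩ := h2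
      have hm : m ≠ 0 := by rintro rfl; omega
      have e1 : i * m - i = i * (m - 1) := by
        obtain ⟨k, rfl⟩ : ∃ k, m = k + 1 := ⟨m - 1, by omega⟩
        rw [Nat.mul_succ]
        simp
      rw [if_pos (Dvd.intro _ rfl), e1, if_pos (Dvd.intro _ rfl),
        Nat.mul_div_cancel_left _ (by omega : 0 < i), Nat.mul_div_cancel_left _ (by omega : 0 < i)]
      have e2 : c * c ^ (m - 1) = c ^ m := by
        rw [← pow_succ']; congr 1; omega
      rw [e2, sub_self]
    · have h3 : ¬ i ∣ (n - i) := by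
        intro hd
        exact h2 (by
          obtain ⟨k, hk⟩ := hd
          exact ⟨k + 1, by rw [Nat.mul_succ]; omega⟩)
      rw [if_neg h2, if_neg h3, mul_zero, sub_zero]
  · rw [if_neg h1, geo, PowerSeries.coeff_mk, mul_zero, sub_zero]
    by_cases hn : n = 0
    · subst hn
      rw [if_pos (dvd_zero i), if_pos rfl, Nat.zero_div, pow_zero]
    · rw [if_neg hn, if_neg (fun hd => h1 (Nat.le_of_dvd (by omega) hd))]

def Dt (M : ℕ) : PS := ∏ j ∈ Icc 1 M, (1 - Cq RatFunc.X * PowerSeries.X ^ j)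
def Db (M : ℕ) : PS := ∏ j ∈ Icc 1 M, (1 - Cq (RatFunc.X)⁻¹ * PowerSeries.X ^ j)
def DtS (M i : ℕ) : PS := ∏ j ∈ Icc 1 M \ {i}, (1 - Cq RatFunc.X * PowerSeries.X ^ j)
def DbS (M i : ℕ) : PS := ∏ j ∈ Icc 1 M \ {i}, (1 - Cq (RatFunc.X)⁻¹ * PowerSeries.X ^ j)

def Gg (i : ℕ) : PS := geo RatFunc.X i + geo (RatFunc.X)⁻¹ i - 1

def SS (M : ℕ) : PS := ∑ i ∈ Icc 1 M, aA (PowerSeries.X : PS) M i * Gg i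

lemma zc_mul_inv : zc * Cq (RatFunc.X)⁻¹ = 1 := by
  rw [← map_mul, mul_inv_cancel₀ xq_ne, map_one]

lemma hEtop_PS (M : ℕ) : Etop (PowerSeries.X : PS) zc M = Dt M :=
  Finset.prod_congr rfl (fun j _ => by ring)

lemma hEtopS_PS (M i : ℕ) : EtopSkip (PowerSeries.X : PS) zc M i = DtS M i :=
  Finset.prod_congr rfl (fun j _ => by ring)

lemma hEbot_PS (M : ℕ) : Ebot (PowerSeries.X : PS) zc M = zc ^ M * Db M := by
  unfold Ebot Db
  have step : ∀ j ∈ Icc 1 M, zc - (PowerSeries.X : PS) ^ j =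
      zc * (1 - Cq (RatFunc.X)⁻¹ * PowerSeries.X ^ j) := by
    intro j _
    have e : zc * (Cq (RatFunc.X)⁻¹ * PowerSeries.X ^ j) = PowerSeries.X ^ j := by
      rw [← mul_assoc, zc_mul_inv, one_mul]
    rw [mul_sub, mul_one, e]
  rw [Finset.prod_congr rfl step, Finset.prod_mul_distrib, Finset.prod_const, Nat.card_Icc]
  norm_num

lemma hEbotS_PS (M i : ℕ) (hi : i ∈ Icc 1 M) :
    EbotSkip (PowerSeries.X : PS) zc M i = zc ^ (M - 1) * DbS M i := by
  unfold EbotSkip DbS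
  have step : ∀ j ∈ Icc 1 M \ {i}, zc - (PowerSeries.X : PS) ^ j =
      zc * (1 - Cq (RatFunc.X)⁻¹ * PowerSeries.X ^ j) := by
    intro j _
    have e : zc * (Cq (RatFunc.X)⁻¹ * PowerSeries.X ^ j) = PowerSeries.X ^ j := by
      rw [← mul_assoc, zc_mul_inv, one_mul]
    rw [mul_sub, mul_one, e]
  have hcard : (Icc 1 M \ {i}).card = M - 1 := by
    rw [Finset.card_sdiff_of_subset (by simpa using hi)]
    simp [Nat.card_Icc]
  rw [Finset.prod_congr rfl step, Finset.prod_mul_distrib, Finset.prod_const, hcard]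

lemma zc_ne : (zc : PS) ≠ 0 := by
  intro h0
  apply xq_ne
  have := congrArg (PowerSeries.constantCoeff (R := RatFunc ℚ)) h0
  simpa using this

lemma step1 (M : ℕ) (hM : 1 ≤ M) :
    ∑ i ∈ Icc 1 M, aA (PowerSeries.X : PS) M i *
      (DtS M i * Db M + Dt M * DbS M i - Dt M * Db M) =
    pw (PowerSeries.X : PS) 1 M * pw (PowerSeries.X : PS) 1 (2 * M) := by
  have h := diamond_PS M hM
  unfold lhs rhs at h
  have hzM : zc * zc ^ (M - 1) = zc ^ M := by
    rw [← pow_succ']; congr 1; omega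
  have hterm : ∀ i ∈ Icc 1 M,
      aA (PowerSeries.X : PS) M i *
        (EtopSkip (PowerSeries.X : PS) zc M i * Ebot (PowerSeries.X : PS) zc M +
          zc * (Etop (PowerSeries.X : PS) zc M * EbotSkip (PowerSeries.X : PS) zc M i) -
          Etop (PowerSeries.X : PS) zc M * Ebot (PowerSeries.X : PS) zc M) =
      zc ^ M * (aA (PowerSeries.X : PS) M i *
        (DtS M i * Db M + Dt M * DbS M i - Dt M * Db M)) := by
    intro i hi
    rw [hEtop_PS, hEbot_PS, hEtopS_PS, hEbotS_PS M i hi, ← hzM]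
    ring
  rw [Finset.sum_congr rfl hterm, ← Finset.mul_sum] at h
  apply mul_left_cancel₀ (pow_ne_zero M zc_ne)
  rw [h]
  ring

lemma Dt_split (M i : ℕ) (hi : i ∈ Icc 1 M) :
    Dt M = DtS M i * (1 - Cq RatFunc.X * PowerSeries.X ^ i) :=
  Finset.prod_eq_prod_diff_singleton_mul hi _

lemma Db_split (M i : ℕ) (hi : i ∈ Icc 1 M) :
    Db M = DbS M i * (1 - Cq (RatFunc.X)⁻¹ * PowerSeries.X ^ i) :=
  Finset.prod_eq_prod_diff_singleton_mul hi _

lemma step2 (M : ℕ) (hM : 1 ≤ M) :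
    Dt M * Db M * SS M =
      pw (PowerSeries.X : PS) 1 M * pw (PowerSeries.X : PS) 1 (2 * M) := by
  rw [← step1 M hM, SS, Finset.mul_sum]
  apply Finset.sum_congr rfl
  intro i hi
  have hi1 : 1 ≤ i := by simp at hi; omega
  have e1 : Dt M * Db M * geo RatFunc.X i = DtS M i * Db M := by
    rw [Dt_split M i hi]
    calc DtS M i * (1 - Cq RatFunc.X * PowerSeries.X ^ i) * Db M * geo RatFunc.X i
        = DtS M i * Db M * ((1 - Cq RatFunc.X * PowerSeries.X ^ i) * geo RatFunc.X i) := by ring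
      _ = DtS M i * Db M := by rw [geo_mul _ _ hi1, mul_one]
  have e2 : Dt M * Db M * geo (RatFunc.X)⁻¹ i = Dt M * DbS M i := by
    rw [Db_split M i hi]
    calc Dt M * (DbS M i * (1 - Cq (RatFunc.X)⁻¹ * PowerSeries.X ^ i)) * geo (RatFunc.X)⁻¹ i
        = Dt M * DbS M i * ((1 - Cq (RatFunc.X)⁻¹ * PowerSeries.X ^ i) * geo (RatFunc.X)⁻¹ i) := by
          ring
      _ = Dt M * DbS M i := by rw [geo_mul _ _ hi1, mul_one]
  calc Dt M * Db M * (aA (PowerSeries.X : PS) M i * Gg i)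
      = aA (PowerSeries.X : PS) M i *
        (Dt M * Db M * geo RatFunc.X i + Dt M * Db M * geo (RatFunc.X)⁻¹ i
          - Dt M * Db M) := by unfold Gg; ring
    _ = aA (PowerSeries.X : PS) M i * (DtS M i * Db M + Dt M * DbS M i - Dt M * Db M) := by
        rw [e1, e2]

/-- the product appearing in the theorem -/
def Fprod (M : ℕ) : PS := ∏ i ∈ Icc 1 M,
  ((1 - PowerSeries.X ^ i) ^ 2 *
    (1 - PowerSeries.C (R := RatFunc ℚ) (RatFunc.X + RatFunc.X⁻¹) * PowerSeries.X ^ i +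
      PowerSeries.X ^ (2 * i))⁻¹)

lemma trinom_eq (i : ℕ) :
    (1 : PS) - Cq (RatFunc.X + RatFunc.X⁻¹) * PowerSeries.X ^ i + PowerSeries.X ^ (2 * i) =
      (1 - Cq RatFunc.X * PowerSeries.X ^ i) * (1 - Cq (RatFunc.X)⁻¹ * PowerSeries.X ^ i) := by
  have h2 : (PowerSeries.X : PS) ^ i * PowerSeries.X ^ i = PowerSeries.X ^ (2 * i) := by
    rw [← pow_add]; congr 1; omega
  calc (1 : PS) - Cq (RatFunc.X + RatFunc.X⁻¹) * PowerSeries.X ^ i + PowerSeries.X ^ (2 * i)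
      = 1 - (Cq RatFunc.X + Cq (RatFunc.X)⁻¹) * PowerSeries.X ^ i + PowerSeries.X ^ (2 * i) := by
        rw [← map_add]
    _ = 1 - (Cq RatFunc.X + Cq (RatFunc.X)⁻¹) * PowerSeries.X ^ i +
        (zc * Cq (RatFunc.X)⁻¹) * (PowerSeries.X ^ i * PowerSeries.X ^ i) := by
        rw [zc_mul_inv, one_mul, h2]
    _ = (1 - Cq RatFunc.X * PowerSeries.X ^ i) * (1 - Cq (RatFunc.X)⁻¹ * PowerSeries.X ^ i) := by
        ring

lemma trinom_cc (i : ℕ) (hi : 1 ≤ i) :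
    PowerSeries.constantCoeff (R := RatFunc ℚ)
      ((1 : PS) - Cq (RatFunc.X + RatFunc.X⁻¹) * PowerSeries.X ^ i + PowerSeries.X ^ (2 * i)) =
      1 := by
  rw [map_add, map_sub, map_one, map_mul, map_pow, map_pow, PowerSeries.constantCoeff_X,
    zero_pow (by omega : i ≠ 0), zero_pow (by omega : 2 * i ≠ 0)]
  ring

lemma trinom_inv (i : ℕ) (hi : 1 ≤ i) :
    ((1 : PS) - Cq (RatFunc.X + RatFunc.X⁻¹) * PowerSeries.X ^ i + PowerSeries.X ^ (2 * i))⁻¹ =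
      geo RatFunc.X i * geo (RatFunc.X)⁻¹ i := by
  have hcc := trinom_cc i hi
  have hne : ((1 : PS) - Cq (RatFunc.X + RatFunc.X⁻¹) * PowerSeries.X ^ i +
      PowerSeries.X ^ (2 * i)) ≠ 0 := by
    intro h0
    rw [h0, map_zero] at hcc
    exact one_ne_zero hcc.symm
  apply mul_left_cancel₀ hne
  rw [PowerSeries.mul_inv_cancel _ (by rw [hcc]; exact one_ne_zero), trinom_eq]
  symm
  calc (1 - Cq RatFunc.X * PowerSeries.X ^ i) * (1 - Cq (RatFunc.X)⁻¹ * PowerSeries.X ^ i) *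
        (geo RatFunc.X i * geo (RatFunc.X)⁻¹ i)
      = ((1 - Cq RatFunc.X * PowerSeries.X ^ i) * geo RatFunc.X i) *
        ((1 - Cq (RatFunc.X)⁻¹ * PowerSeries.X ^ i) * geo (RatFunc.X)⁻¹ i) := by ring
    _ = 1 := by rw [geo_mul _ _ hi, geo_mul _ _ hi, one_mul]

lemma Fprod_mul (M : ℕ) :
    Fprod M * (Dt M * Db M) = (pw (PowerSeries.X : PS) 1 M) ^ 2 := by
  unfold Fprod Dt Db pw
  rw [← Finset.prod_pow, ← Finset.prod_mul_distrib, ← Finset.prod_mul_distrib]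
  apply Finset.prod_congr rfl
  intro i hi
  have hi1 : 1 ≤ i := by simp at hi; omega
  rw [trinom_inv i hi1]
  calc (1 - PowerSeries.X ^ i) ^ 2 * (geo RatFunc.X i * geo (RatFunc.X)⁻¹ i) *
        ((1 - Cq RatFunc.X * PowerSeries.X ^ i) * (1 - Cq (RatFunc.X)⁻¹ * PowerSeries.X ^ i))
      = (1 - PowerSeries.X ^ i) ^ 2 *
        (((1 - Cq RatFunc.X * PowerSeries.X ^ i) * geo RatFunc.X i) *
          ((1 - Cq (RatFunc.X)⁻¹ * PowerSeries.X ^ i) * geo (RatFunc.X)⁻¹ i)) := by ring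
    _ = (1 - PowerSeries.X ^ i) ^ 2 := by rw [geo_mul _ _ hi1, geo_mul _ _ hi1]; ring

lemma DtDb_ne (M : ℕ) : Dt M * Db M ≠ 0 := by
  intro h0
  have h1 : PowerSeries.constantCoeff (R := RatFunc ℚ) (Dt M * Db M) = 1 := by
    rw [map_mul]
    have e : ∀ (c : RatFunc ℚ), PowerSeries.constantCoeff (R := RatFunc ℚ)
        (∏ j ∈ Icc 1 M, (1 - Cq c * PowerSeries.X ^ j)) = 1 := by
      intro c
      rw [map_prod]
      apply Finset.prod_eq_one
      intro j hj
      have hj1 : 1 ≤ j := by simp at hj; omega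
      rw [map_sub, map_one, map_mul, map_pow, PowerSeries.constantCoeff_X,
        zero_pow (by omega : j ≠ 0), PowerSeries.constantCoeff_C]
      ring
    rw [Dt, Db, e, e, one_mul]
  rw [h0, map_zero] at h1
  exact one_ne_zero h1.symm

lemma Fprod_W (M : ℕ) (hM : 1 ≤ M) :
    Fprod M * pw (PowerSeries.X : PS) (M + 1) (2 * M) = SS M := by
  apply mul_left_cancel₀ (DtDb_ne M)
  have hW : pw (PowerSeries.X : PS) 1 M * pw (PowerSeries.X : PS) (M + 1) (2 * M) =
      pw (PowerSeries.X : PS) 1 (2 * M) := pw_mul_pw _ M (2 * M) (by omega)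
  calc Dt M * Db M * (Fprod M * pw (PowerSeries.X : PS) (M + 1) (2 * M))
      = (Fprod M * (Dt M * Db M)) * pw (PowerSeries.X : PS) (M + 1) (2 * M) := by ring
    _ = (pw (PowerSeries.X : PS) 1 M) ^ 2 * pw (PowerSeries.X : PS) (M + 1) (2 * M) := by
        rw [Fprod_mul]
    _ = pw (PowerSeries.X : PS) 1 M *
        (pw (PowerSeries.X : PS) 1 M * pw (PowerSeries.X : PS) (M + 1) (2 * M)) := by ring
    _ = pw (PowerSeries.X : PS) 1 M * pw (PowerSeries.X : PS) 1 (2 * M) := by rw [hW]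
    _ = Dt M * Db M * SS M := (step2 M hM).symm

end PartB
end CrankAux

namespace CrankAux
open Finset

noncomputable section PartC

local notation "PS" => PowerSeries (RatFunc ℚ)
local notation "XX" => (PowerSeries.X : PowerSeries (RatFunc ℚ))
local notation "Cq" => (PowerSeries.C (R := RatFunc ℚ))
local notation "cf" => (PowerSeries.coeff (R := RatFunc ℚ))

lemma tnum_lt (N : ℕ) (hN : 2 ≤ N) : N < tnum N := by
  induction N with
  | zero => omega
  | succ n ih =>
    rcases Nat.lt_or_ge n 2 with h | h
    · interval_cases n <;> simp [tnum] <;> omega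
    · have := ih h; simp only [tnum]; omega

lemma one_add_pow_prod {s : Finset ℕ} (T : ℕ) (f : ℕ → PS)
    (h : ∀ i ∈ s, ∃ r, f i = 1 + PowerSeries.X ^ T * r) :
    ∃ r, ∏ i ∈ s, f i = 1 + PowerSeries.X ^ T * r := by
  classical
  induction s using Finset.induction with
  | empty => exact ⟨0, by simp⟩
  | @insert a s ha ih =>
    obtain ⟨r1, h1⟩ := h a (Finset.mem_insert_self a s)
    obtain ⟨r2, h2⟩ := ih (fun i hi => h i (Finset.mem_insert_of_mem hi))
    rw [Finset.prod_insert ha, h1, h2]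
    exact ⟨r1 + r2 + PowerSeries.X ^ T * (r1 * r2), by ring⟩

lemma coeff_kill (N T : ℕ) (hT : N < T) (φ : PS) :
    cf N (PowerSeries.X ^ T * φ) = 0 := by
  rw [PowerSeries.coeff_X_pow_mul', if_neg (by omega)]

lemma coeff_mul_one_add (N T : ℕ) (hT : N < T) (φ r : PS) :
    cf N (φ * (1 + PowerSeries.X ^ T * r)) = cf N φ := by
  have e : φ * (1 + PowerSeries.X ^ T * r) = φ + PowerSeries.X ^ T * (r * φ) := by ring
  rw [e, map_add, coeff_kill N T hT, add_zero]

lemma pw_tail (a b T : ℕ) (ha : T + 1 ≤ a) :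
    ∃ r, pw (PowerSeries.X : PS) a b = 1 + PowerSeries.X ^ (T + 1) * r := by
  apply one_add_pow_prod
  intro s hs
  simp only [Finset.mem_Icc] at hs
  refine ⟨-(PowerSeries.X ^ (s - (T + 1))), ?_⟩
  have e : (PowerSeries.X : PS) ^ (T + 1) * PowerSeries.X ^ (s - (T + 1)) =
      PowerSeries.X ^ s := by
    rw [← pow_add]; congr 1; omega
  rw [mul_neg, e]; ring

/-- per-factor form of `Fprod` beyond truncation -/
lemma factor_tail (i T : ℕ) (hi : T + 1 ≤ i) :
    ∃ r, (1 - (PowerSeries.X : PS) ^ i) ^ 2 *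
      (1 - Cq (RatFunc.X + RatFunc.X⁻¹) * PowerSeries.X ^ i + PowerSeries.X ^ (2 * i))⁻¹ =
      1 + PowerSeries.X ^ (T + 1) * r := by
  have hi1 : 1 ≤ i := by omega
  have tg : ((1 : PS) - Cq (RatFunc.X + RatFunc.X⁻¹) * PowerSeries.X ^ i +
      PowerSeries.X ^ (2 * i)) * (geo RatFunc.X i * geo (RatFunc.X)⁻¹ i) = 1 := by
    rw [trinom_eq]
    calc (1 - Cq RatFunc.X * PowerSeries.X ^ i) * (1 - Cq (RatFunc.X)⁻¹ * PowerSeries.X ^ i) *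
          (geo RatFunc.X i * geo (RatFunc.X)⁻¹ i)
        = ((1 - Cq RatFunc.X * PowerSeries.X ^ i) * geo RatFunc.X i) *
          ((1 - Cq (RatFunc.X)⁻¹ * PowerSeries.X ^ i) * geo (RatFunc.X)⁻¹ i) := by ring
      _ = 1 := by rw [geo_mul _ _ hi1, geo_mul _ _ hi1, one_mul]
  have hsq : ((1 : PS) - PowerSeries.X ^ i) ^ 2 =
      (1 - Cq (RatFunc.X + RatFunc.X⁻¹) * PowerSeries.X ^ i + PowerSeries.X ^ (2 * i)) +
        Cq (RatFunc.X + RatFunc.X⁻¹ - 2) * PowerSeries.X ^ i := by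
    have h2 : (PowerSeries.X : PS) ^ i * PowerSeries.X ^ i = PowerSeries.X ^ (2 * i) := by
      rw [← pow_add]; congr 1; omega
    have h3 : (Cq (2 : RatFunc ℚ)) = (2 : PS) := by
      rw [map_ofNat]
    rw [map_sub, map_add, h3, ← h2]
    ring
  rw [trinom_inv i hi1, hsq]
  refine ⟨PowerSeries.X ^ (i - (T + 1)) * (Cq (RatFunc.X + RatFunc.X⁻¹ - 2) *
    (geo RatFunc.X i * geo (RatFunc.X)⁻¹ i)), ?_⟩
  have e : (PowerSeries.X : PS) ^ (T + 1) * PowerSeries.X ^ (i - (T + 1)) =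
      PowerSeries.X ^ i := by
    rw [← pow_add]; congr 1; omega
  calc ((1 - Cq (RatFunc.X + RatFunc.X⁻¹) * PowerSeries.X ^ i + PowerSeries.X ^ (2 * i)) +
        Cq (RatFunc.X + RatFunc.X⁻¹ - 2) * PowerSeries.X ^ i) *
        (geo RatFunc.X i * geo (RatFunc.X)⁻¹ i)
      = (1 - Cq (RatFunc.X + RatFunc.X⁻¹) * PowerSeries.X ^ i + PowerSeries.X ^ (2 * i)) *
          (geo RatFunc.X i * geo (RatFunc.X)⁻¹ i) +
        (PowerSeries.X ^ (T + 1) * PowerSeries.X ^ (i - (T + 1))) *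
          (Cq (RatFunc.X + RatFunc.X⁻¹ - 2) * (geo RatFunc.X i * geo (RatFunc.X)⁻¹ i)) := by
        rw [e]; ring
    _ = 1 + PowerSeries.X ^ (T + 1) * (PowerSeries.X ^ (i - (T + 1)) *
          (Cq (RatFunc.X + RatFunc.X⁻¹ - 2) * (geo RatFunc.X i * geo (RatFunc.X)⁻¹ i))) := by
        rw [tg]; ring

/-- truncation: coefficient `N` only needs the product up to `N` -/
lemma coeff_Fprod_trunc (N M : ℕ) (hNM : N ≤ M) :
    cf N (Fprod M) = cf N (Fprod N) := by
  have hsplit : Fprod M = Fprod N * ∏ i ∈ Ioc N M,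
      ((1 - (PowerSeries.X : PS) ^ i) ^ 2 *
        (1 - Cq (RatFunc.X + RatFunc.X⁻¹) * PowerSeries.X ^ i +
          PowerSeries.X ^ (2 * i))⁻¹) := by
    unfold Fprod
    have h1 : ∀ n : ℕ, Icc 1 n = Ioc 0 n := by intro n; ext j; simp; omega
    rw [h1, h1]
    exact (Finset.prod_Ioc_consecutive _ (by omega) hNM).symm
  have hfac : ∀ i ∈ Ioc N M, ∃ r : PS, (1 - (PowerSeries.X : PS) ^ i) ^ 2 *
      (1 - Cq (RatFunc.X + RatFunc.X⁻¹) * PowerSeries.X ^ i +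
        PowerSeries.X ^ (2 * i))⁻¹ = 1 + PowerSeries.X ^ (N + 1) * r := by
    intro i hi
    rw [Finset.mem_Ioc] at hi
    exact factor_tail i N (by omega)
  obtain ⟨r, hr⟩ := one_add_pow_prod (N + 1) _ hfac
  rw [hsplit, hr, coeff_mul_one_add N (N + 1) (by omega)]

lemma coeff_FN_eq_SS (N : ℕ) (hN : 1 ≤ N) :
    cf N (Fprod N) = cf N (SS (2 * N)) := by
  rw [← coeff_Fprod_trunc N (2 * N) (by omega), ← Fprod_W (2 * N) (by omega)]
  obtain ⟨r, hr⟩ := pw_tail (2 * N + 1) (2 * (2 * N)) N (by omega)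
  rw [hr, coeff_mul_one_add N (N + 1) (by omega)]

end PartC
end CrankAux

namespace CrankAux
open Finset

noncomputable section PartD

local notation "PS" => PowerSeries (RatFunc ℚ)
local notation "XX" => (PowerSeries.X : PowerSeries (RatFunc ℚ))
local notation "Cq" => (PowerSeries.C (R := RatFunc ℚ))
local notation "cf" => (PowerSeries.coeff (R := RatFunc ℚ))
local notation "xq" => (RatFunc.X : RatFunc ℚ)

lemma coeff_Gg (i e : ℕ) :
    cf e (Gg i) =
      (if i ∣ e then xq ^ (e / i) + (xq⁻¹ : RatFunc ℚ) ^ (e / i) else 0) -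
        (if e = 0 then 1 else 0) := by
  unfold Gg geo
  rw [map_sub, map_add, PowerSeries.coeff_mk, PowerSeries.coeff_mk, PowerSeries.coeff_one]
  by_cases h : i ∣ e
  · rw [if_pos h, if_pos h, if_pos h]
  · rw [if_neg h, if_neg h, if_neg h, add_zero]

lemma ite_div_sum (N a i : ℕ) (hi : 1 ≤ i) (ha : a ≤ N) :
    (if i ∣ (N - a) then xq ^ ((N - a) / i) + (xq⁻¹ : RatFunc ℚ) ^ ((N - a) / i) else 0)
      = ∑ m ∈ Icc 0 N, if N = a + i * m then xq ^ m + (xq⁻¹ : RatFunc ℚ) ^ m else 0 := by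
  by_cases hd : i ∣ (N - a)
  · have hm0 : i * ((N - a) / i) = N - a := Nat.mul_div_cancel' hd
    have h1 : ∀ m ∈ Icc 0 N, m ≠ (N - a) / i →
        (if N = a + i * m then xq ^ m + (xq⁻¹ : RatFunc ℚ) ^ m else 0) = 0 := by
      intro m hm hne
      rw [if_neg]
      intro hc
      apply hne
      have he : i * m = i * ((N - a) / i) := by rw [hm0]; omega
      exact Nat.eq_of_mul_eq_mul_left (by omega) he
    have h2 : (N - a) / i ∈ Icc 0 N := by
      rw [Finset.mem_Icc]
      have h3 : (N - a) / i ≤ N - a := Nat.div_le_self _ _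
      exact ⟨Nat.zero_le _, le_trans h3 (by omega)⟩
    rw [if_pos hd, eq_comm, Finset.sum_eq_single_of_mem _ h2 h1, if_pos (by rw [hm0]; omega)]
  · rw [if_neg hd, eq_comm]
    apply Finset.sum_eq_zero
    intro m hm
    rw [if_neg]
    intro hc
    exact hd ⟨m, by omega⟩

lemma coeff_XaGg (N a i : ℕ) (hi : 1 ≤ i) :
    cf N (PowerSeries.X ^ a * Gg i) =
      (∑ m ∈ Icc 0 N, if N = a + i * m then xq ^ m + (xq⁻¹ : RatFunc ℚ) ^ m else 0)
        - (if N = a then 1 else 0) := by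
  rw [PowerSeries.coeff_X_pow_mul']
  by_cases ha : a ≤ N
  · rw [if_pos ha, coeff_Gg i (N - a), ite_div_sum N a i hi ha]
    congr 1
    exact if_congr (by omega) rfl rfl
  · rw [if_neg ha]
    have h1 : (∑ m ∈ Icc 0 N, if N = a + i * m then xq ^ m + (xq⁻¹ : RatFunc ℚ) ^ m else 0)
        = 0 := by
      apply Finset.sum_eq_zero
      intro m hm
      rw [if_neg (by omega)]
    rw [h1, if_neg (by omega), sub_zero]

lemma coeff_SS (N : ℕ) (hN : 2 ≤ N) :
    cf N (SS (2 * N)) = ∑ i ∈ Icc 1 N, (-1 : RatFunc ℚ) ^ (i - 1) *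
      (((∑ m ∈ Icc 0 N, if N = tnum (i - 1) + i * m then xq ^ m + (xq⁻¹ : RatFunc ℚ) ^ m else 0)
          - (if N = tnum (i - 1) then 1 else 0))
        - ((∑ m ∈ Icc 0 N, if N = tnum i + i * m then xq ^ m + (xq⁻¹ : RatFunc ℚ) ^ m else 0)
          - (if N = tnum i then 1 else 0))) := by
  unfold SS
  rw [map_sum]
  rw [← Finset.sum_subset (Finset.Icc_subset_Icc_right (by omega : N ≤ 2 * N))]
  · apply Finset.sum_congr rfl
    intro i hi
    rw [Finset.mem_Icc] at hi
    have hi1 : 1 ≤ i := hi.1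
    -- tail products are 1 + X^(N+1) * r
    obtain ⟨r1, hr1⟩ := pw_tail (2 * N - i + 1) (2 * N) N (by omega)
    obtain ⟨r2, hr2⟩ := pw_tail (2 * N + i + 1) (2 * (2 * N)) N (by omega)
    have hpw : pw XX (2 * N - i + 1) (2 * N) * pw XX (2 * N + i + 1) (2 * (2 * N)) =
        1 + PowerSeries.X ^ (N + 1) * (r1 + r2 + PowerSeries.X ^ (N + 1) * (r1 * r2)) := by
      rw [hr1, hr2]; ring
    have hXsplit : (PowerSeries.X : PS) ^ tnum (i - 1) * (1 - PowerSeries.X ^ i) =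
        PowerSeries.X ^ tnum (i - 1) - PowerSeries.X ^ tnum i := by
      rw [mul_sub, mul_one, ← pow_add, tnum_succ i hi1]
    have hterm : aA (PowerSeries.X : PS) (2 * N) i * Gg i =
        ((PowerSeries.X ^ tnum (i - 1) - PowerSeries.X ^ tnum i) *
          ((-1 : PS) ^ (i - 1) * Gg i)) *
          (1 + PowerSeries.X ^ (N + 1) * (r1 + r2 + PowerSeries.X ^ (N + 1) * (r1 * r2))) := by
      unfold aA
      rw [← hpw, ← hXsplit]
      ring
    rw [hterm, coeff_mul_one_add N (N + 1) (by omega)]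
    have hsign : ((-1 : PS)) ^ (i - 1) = Cq ((-1 : RatFunc ℚ) ^ (i - 1)) := by
      rw [map_pow, map_neg, map_one]
    have e2 : (PowerSeries.X ^ tnum (i - 1) - PowerSeries.X ^ tnum i) *
        ((-1 : PS) ^ (i - 1) * Gg i) =
        Cq ((-1 : RatFunc ℚ) ^ (i - 1)) *
          (PowerSeries.X ^ tnum (i - 1) * Gg i - PowerSeries.X ^ tnum i * Gg i) := by
      rw [hsign]; ring
    rw [e2, PowerSeries.coeff_C_mul, map_sub, coeff_XaGg N _ i hi1, coeff_XaGg N _ i hi1]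
  · intro i hi hni
    rw [Finset.mem_Icc] at hi
    rw [Finset.mem_Icc] at hni
    push_neg at hni
    have hiN : N < i := hni hi.1
    have hb : N < tnum (i - 1) :=
      lt_of_lt_of_le (tnum_lt N hN) (tnum_mono (by omega : N ≤ i - 1))
    have hterm : aA (PowerSeries.X : PS) (2 * N) i * Gg i =
        PowerSeries.X ^ tnum (i - 1) *
          ((-1 : PS) ^ (i - 1) * (1 - PowerSeries.X ^ i) * pw XX (2 * N - i + 1) (2 * N) *
            pw XX (2 * N + i + 1) (2 * (2 * N)) * Gg i) := by
      unfold aA; ring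
    rw [hterm, coeff_kill N _ hb]

end PartD
end CrankAux

namespace CrankAux
open Finset

noncomputable section PartE

local notation "Kq" => RatFunc ℚ
local notation "xq" => (RatFunc.X : RatFunc ℚ)

lemma neg_pow_pred (i : ℕ) (hi : 1 ≤ i) : (-1 : Kq) ^ i = -(-1 : Kq) ^ (i - 1) := by
  obtain ⟨a, rfl⟩ : ∃ a, i = a + 1 := ⟨i - 1, by omega⟩
  rw [pow_succ]
  simp

lemma cond0_iff (N k : ℕ) : (N = tnum k) ↔ (2 * N = k * (k + 1)) := by
  have h2 := tnum_two k; omega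

lemma cond1_iff (N i m : ℕ) (hi : 1 ≤ i) :
    (N = tnum (i - 1) + i * m) ↔ (2 * N = i * (i + 2 * m - 1)) := by
  obtain ⟨a, rfl⟩ : ∃ a, i = a + 1 := ⟨i - 1, by omega⟩
  have h2 := tnum_two a
  have hidx : a + 1 - 1 = a := rfl
  rw [hidx, show a + 1 + 2 * m - 1 = a + 2 * m from by omega]
  have e1 : (a + 1) * (a + 2 * m) = a * (a + 1) + 2 * ((a + 1) * m) := by ring
  omega

lemma cond2_iff (N i m : ℕ) (hi : 1 ≤ i) :
    (N = tnum i + i * m) ↔ (2 * N = i * (i + 2 * m + 1)) := by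
  obtain ⟨a, rfl⟩ : ∃ a, i = a + 1 := ⟨i - 1, by omega⟩
  have h2 := tnum_two (a + 1)
  have e1 : (a + 1) * (a + 1 + 2 * m + 1) = (a + 1) * (a + 1 + 1) + 2 * ((a + 1) * m) := by ring
  omega

lemma ne_big (N k s : ℕ) (hk : N + 1 ≤ k) (hs : N + 2 ≤ s) : 2 * N ≠ k * s := by
  have h1 : (N + 1) * (N + 2) ≤ k * s := Nat.mul_le_mul hk hs
  have h2 : (N + 1) * (N + 2) = N * N + 3 * N + 2 := by ring
  omega

lemma sum_trunc (N : ℕ) (f : ℕ → Kq) (h : ∀ k, N < k → f k = 0) :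
    ∑ k ∈ Icc 1 (2 * N), f k = ∑ k ∈ Icc 1 N, f k := by
  refine (Finset.sum_subset (Finset.Icc_subset_Icc_right (by omega)) ?_).symm
  intro k hk hnk
  rw [Finset.mem_Icc] at hk
  rw [Finset.mem_Icc] at hnk
  push_neg at hnk
  exact h k (hnk hk.1)

lemma cast_c0 (N : ℕ) : ((cCoeff N 0 : ℤ) : Kq) =
    ∑ k ∈ Icc 1 (2 * N), if 2 * N = k * (k + 1) then 2 * (-1 : Kq) ^ k else 0 := by
  rw [cCoeff, if_pos rfl]
  push_cast
  apply Finset.sum_congr rfl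
  intro k _
  split <;> push_cast <;> ring

lemma cast_cm (N m : ℕ) (hm : 1 ≤ m) : ((cCoeff N m : ℤ) : Kq) =
    ∑ k ∈ Icc 1 (2 * N),
      ((if 2 * N = k * (k + 2 * m + 1) then (-1 : Kq) ^ k else 0) +
        (if 2 * N = k * (k + 2 * m - 1) then (-1 : Kq) ^ (k - 1) else 0)) := by
  rw [cCoeff, if_neg (by omega)]
  push_cast
  apply Finset.sum_congr rfl
  intro k _
  congr 1 <;> (split <;> push_cast <;> ring)

lemma c0_eq (N : ℕ) (hN : 2 ≤ N) : ((cCoeff N 0 : ℤ) : Kq) =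
    ∑ k ∈ Icc 1 N, (2 : Kq) * ((-1) ^ k * (if N = tnum k then 1 else 0)) := by
  rw [cast_c0, sum_trunc]
  · apply Finset.sum_congr rfl
    intro k _
    by_cases h : N = tnum k
    · rw [if_pos ((cond0_iff N k).mp h), if_pos h]; ring
    · rw [if_neg (fun hc => h ((cond0_iff N k).mpr hc)), if_neg h]; ring
  · intro k hk
    rw [if_neg (ne_big N k (k + 1) (by omega) (by omega))]

lemma cm_eq (N m : ℕ) (hN : 2 ≤ N) (hm : 1 ≤ m) : ((cCoeff N m : ℤ) : Kq) =
    ∑ k ∈ Icc 1 N,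
      ((if 2 * N = k * (k + 2 * m + 1) then (-1 : Kq) ^ k else 0) +
        (if 2 * N = k * (k + 2 * m - 1) then (-1 : Kq) ^ (k - 1) else 0)) := by
  rw [cast_cm N m hm, sum_trunc]
  intro k hk
  rw [if_neg (ne_big N k _ (by omega) (by omega)),
    if_neg (ne_big N k _ (by omega) (by omega)), add_zero]

lemma Asum_split (N i a : ℕ) (hN : 1 ≤ N) :
    (∑ m ∈ Icc 0 N, if N = a + i * m then xq ^ m + (xq⁻¹ : Kq) ^ m else 0) =
      (if N = a then 2 else 0) +
        ∑ m ∈ Icc 1 N, (if N = a + i * m then xq ^ m + (xq⁻¹ : Kq) ^ m else 0) := by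
  have hins : Icc 0 N = insert 0 (Icc 1 N) := by ext j; simp; omega
  rw [hins, Finset.sum_insert (by simp)]
  congr 1
  rw [mul_zero, add_zero, pow_zero, pow_zero]
  split <;> norm_num

lemma boundary_reindex (N : ℕ) (hN : 2 ≤ N) :
    (∑ i ∈ Icc 1 N, (-1 : Kq) ^ (i - 1) * (if N = tnum (i - 1) then 1 else 0)) =
      ∑ k ∈ Icc 1 N, (-1 : Kq) ^ k * (if N = tnum k then 1 else 0) := by
  have h1 : (∑ i ∈ Icc 1 N, (-1 : Kq) ^ (i - 1) * (if N = tnum (i - 1) then 1 else 0)) =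
      ∑ k ∈ Icc 0 (N - 1), (-1 : Kq) ^ k * (if N = tnum k then 1 else 0) := by
    apply Finset.sum_nbij' (fun i => i - 1) (fun k => k + 1) <;> intros <;> simp_all <;> omega
  rw [h1]
  have h2 : Icc 0 (N - 1) = insert 0 (Icc 1 (N - 1)) := by ext j; simp; omega
  rw [h2, Finset.sum_insert (by simp)]
  have h3 : (if N = tnum 0 then (1 : Kq) else 0) = 0 := by
    rw [if_neg]
    show ¬ N = 0
    omega
  rw [h3, mul_zero, zero_add]
  have h4 := Finset.sum_Icc_succ_top (a := 1) (b := N - 1) (by omega)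
    (fun k => (-1 : Kq) ^ k * (if N = tnum k then 1 else 0))
  rw [show N - 1 + 1 = N from by omega] at h4
  rw [h4]
  have h5 : (if N = tnum N then (1 : Kq) else 0) = 0 := by
    rw [if_neg]
    have := tnum_lt N hN
    omega
  rw [h5, mul_zero, add_zero]

lemma match_lemma (N : ℕ) (hN : 2 ≤ N) :
    (∑ i ∈ Icc 1 N, (-1 : Kq) ^ (i - 1) *
      (((∑ m ∈ Icc 0 N, if N = tnum (i - 1) + i * m then xq ^ m + (xq⁻¹ : Kq) ^ m else 0)
          - (if N = tnum (i - 1) then 1 else 0))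
        - ((∑ m ∈ Icc 0 N, if N = tnum i + i * m then xq ^ m + (xq⁻¹ : Kq) ^ m else 0)
          - (if N = tnum i then 1 else 0)))) =
    ((cCoeff N 0 : ℤ) : Kq) +
      ∑ m ∈ Icc 1 N, ((cCoeff N m : ℤ) : Kq) * (xq ^ m + (xq⁻¹ : Kq) ^ m) := by
  have hN1 : 1 ≤ N := by omega
  have hsummand : ∀ i ∈ Icc 1 N, (-1 : Kq) ^ (i - 1) *
      (((∑ m ∈ Icc 0 N, if N = tnum (i - 1) + i * m then xq ^ m + (xq⁻¹ : Kq) ^ m else 0)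
          - (if N = tnum (i - 1) then 1 else 0))
        - ((∑ m ∈ Icc 0 N, if N = tnum i + i * m then xq ^ m + (xq⁻¹ : Kq) ^ m else 0)
          - (if N = tnum i then 1 else 0))) =
      ((-1 : Kq) ^ (i - 1) * (if N = tnum (i - 1) then 1 else 0)
        + (-1 : Kq) ^ i * (if N = tnum i then 1 else 0))
      + ((-1 : Kq) ^ (i - 1) *
          (∑ m ∈ Icc 1 N, if N = tnum (i - 1) + i * m then xq ^ m + (xq⁻¹ : Kq) ^ m else 0)
        + (-1 : Kq) ^ i *
          (∑ m ∈ Icc 1 N, if N = tnum i + i * m then xq ^ m + (xq⁻¹ : Kq) ^ m else 0)) := by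
    intro i hi
    rw [Finset.mem_Icc] at hi
    rw [Asum_split N i (tnum (i - 1)) hN1, Asum_split N i (tnum i) hN1,
      neg_pow_pred i hi.1,
      show (if N = tnum (i - 1) then (2 : Kq) else 0)
        = 2 * (if N = tnum (i - 1) then 1 else 0) from by split <;> norm_num,
      show (if N = tnum i then (2 : Kq) else 0)
        = 2 * (if N = tnum i then 1 else 0) from by split <;> norm_num]
    ring
  rw [Finset.sum_congr rfl hsummand, Finset.sum_add_distrib, Finset.sum_add_distrib,
    Finset.sum_add_distrib]
  -- boundary part
  have hbd : ((∑ i ∈ Icc 1 N, (-1 : Kq) ^ (i - 1) * (if N = tnum (i - 1) then 1 else 0))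
      + ∑ i ∈ Icc 1 N, (-1 : Kq) ^ i * (if N = tnum i then 1 else 0)) =
      ((cCoeff N 0 : ℤ) : Kq) := by
    rw [boundary_reindex N hN, c0_eq N hN, ← Finset.sum_add_distrib]
    apply Finset.sum_congr rfl
    intro k _
    ring
  -- m-part
  have hm : ((∑ i ∈ Icc 1 N, (-1 : Kq) ^ (i - 1) *
        (∑ m ∈ Icc 1 N, if N = tnum (i - 1) + i * m then xq ^ m + (xq⁻¹ : Kq) ^ m else 0))
      + ∑ i ∈ Icc 1 N, (-1 : Kq) ^ i *
        (∑ m ∈ Icc 1 N, if N = tnum i + i * m then xq ^ m + (xq⁻¹ : Kq) ^ m else 0)) =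
      ∑ m ∈ Icc 1 N, ((cCoeff N m : ℤ) : Kq) * (xq ^ m + (xq⁻¹ : Kq) ^ m) := by
    rw [← Finset.sum_add_distrib]
    have e3 : ∀ i ∈ Icc 1 N, ((-1 : Kq) ^ (i - 1) *
        (∑ m ∈ Icc 1 N, if N = tnum (i - 1) + i * m then xq ^ m + (xq⁻¹ : Kq) ^ m else 0)
        + (-1 : Kq) ^ i *
        (∑ m ∈ Icc 1 N, if N = tnum i + i * m then xq ^ m + (xq⁻¹ : Kq) ^ m else 0)) =
        ∑ m ∈ Icc 1 N, ((-1 : Kq) ^ (i - 1) *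
          (if N = tnum (i - 1) + i * m then xq ^ m + (xq⁻¹ : Kq) ^ m else 0)
          + (-1 : Kq) ^ i *
          (if N = tnum i + i * m then xq ^ m + (xq⁻¹ : Kq) ^ m else 0)) := by
      intro i _
      rw [Finset.mul_sum, Finset.mul_sum, ← Finset.sum_add_distrib]
    rw [Finset.sum_congr rfl e3, Finset.sum_comm]
    apply Finset.sum_congr rfl
    intro m hm'
    rw [Finset.mem_Icc] at hm'
    rw [cm_eq N m hN hm'.1, Finset.sum_mul]
    apply Finset.sum_congr rfl
    intro k hk
    rw [Finset.mem_Icc] at hk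
    rw [if_congr (cond1_iff N k m hk.1) rfl rfl, if_congr (cond2_iff N k m hk.1) rfl rfl]
    split_ifs <;> ring
  rw [hbd, hm]

end PartE
end CrankAux

namespace CrankAux
open Finset

noncomputable section PartF

local notation "Kq" => RatFunc ℚ
local notation "xq" => (RatFunc.X : RatFunc ℚ)
local notation "cf" => (PowerSeries.coeff (R := RatFunc ℚ))
local notation "XX" => (PowerSeries.X : PowerSeries (RatFunc ℚ))

lemma RHS_eval (N : ℕ) (hN : 1 ≤ N) :
    Polynomial.aeval (RatFunc.X : RatFunc ℚ) (Cpoly N) / (RatFunc.X : RatFunc ℚ) ^ N =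
      ((cCoeff N 0 : ℤ) : Kq) +
        ∑ m ∈ Icc 1 N, ((cCoeff N m : ℤ) : Kq) * (xq ^ m + (xq⁻¹ : Kq) ^ m) := by
  rw [div_eq_iff (pow_ne_zero N xq_ne)]
  unfold Cpoly
  rw [map_add, map_mul, map_pow, Polynomial.aeval_X, Polynomial.aeval_C, map_sum]
  rw [add_mul, Finset.sum_mul]
  congr 1
  · rw [eq_intCast (algebraMap ℤ Kq)]
  · apply Finset.sum_congr rfl
    intro m hm
    rw [Finset.mem_Icc] at hm
    rw [map_mul, Polynomial.aeval_C, map_add, map_pow, map_pow, Polynomial.aeval_X]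
    have k1 : xq ^ (N + m) = xq ^ m * xq ^ N := by rw [← pow_add]; congr 1; omega
    have k2 : xq ^ (N - m) = (xq⁻¹ : Kq) ^ m * xq ^ N := by
      rw [pow_sub₀ _ xq_ne hm.2, inv_pow]; ring
    rw [k1, k2, eq_intCast (algebraMap ℤ Kq)]
    ring

lemma geo_coeff_one (c : Kq) (n : ℕ) : cf n (geo c 1) = c ^ n := by
  rw [geo, PowerSeries.coeff_mk, if_pos (one_dvd n), Nat.div_one]

lemma case_one :
    cf 1 (Fprod 1) =
      Polynomial.aeval (RatFunc.X : RatFunc ℚ) (Cpoly 1) / (RatFunc.X : RatFunc ℚ) ^ 1 := by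
  have hc0 : cCoeff 1 0 = -2 := by decide
  have hc1 : cCoeff 1 1 = 1 := by decide
  rw [RHS_eval 1 le_rfl, hc0, Finset.Icc_self, Finset.sum_singleton, hc1]
  have hF : Fprod 1 = (1 - XX ^ 1) ^ 2 * (geo xq 1 * geo (xq⁻¹) 1) := by
    unfold Fprod
    rw [Finset.Icc_self, Finset.prod_singleton, trinom_inv 1 le_rfl]
  have hexp : Fprod 1 = (geo xq 1 * geo (xq⁻¹) 1)
      - (XX * (geo xq 1 * geo (xq⁻¹) 1)) - (XX * (geo xq 1 * geo (xq⁻¹) 1))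
      + XX ^ 2 * (geo xq 1 * geo (xq⁻¹) 1) := by
    rw [hF]; ring
  have hG1 : cf 1 (geo xq 1 * geo (xq⁻¹) 1) = xq⁻¹ + xq := by
    rw [PowerSeries.coeff_mul, Finset.Nat.sum_antidiagonal_eq_sum_range_succ_mk,
      Finset.sum_range_succ, Finset.sum_range_succ, Finset.sum_range_zero]
    rw [geo_coeff_one, geo_coeff_one, geo_coeff_one, geo_coeff_one]
    norm_num
  have hG0 : cf 0 (geo xq 1 * geo (xq⁻¹) 1) = 1 := by
    rw [PowerSeries.coeff_mul, Finset.Nat.sum_antidiagonal_eq_sum_range_succ_mk,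
      Finset.sum_range_succ, Finset.sum_range_zero]
    rw [geo_coeff_one, geo_coeff_one]
    norm_num
  have hX1 : cf 1 (XX * (geo xq 1 * geo (xq⁻¹) 1)) = 1 := by
    rw [show (XX : PowerSeries (RatFunc ℚ)) * (geo xq 1 * geo (xq⁻¹) 1) =
      XX ^ 1 * (geo xq 1 * geo (xq⁻¹) 1) from by ring, PowerSeries.coeff_X_pow_mul', if_pos le_rfl]
    simpa using hG0
  have hX2 : cf 1 (XX ^ 2 * (geo xq 1 * geo (xq⁻¹) 1)) = 0 := by
    rw [PowerSeries.coeff_X_pow_mul', if_neg (by omega)]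
  rw [hexp, map_add, map_sub, map_sub, hG1, hX1, hX2]
  push_cast
  ring

end PartF
end CrankAux


/-- In the power series ring in `t` over the rational function field `ℚ(X)`, the coefficient of
`t^N` in `∏_{i=1}^{N} (1-t^i)² (1 - (X+X⁻¹) t^i + t^{2i})⁻¹` is `C_N(X)/X^N`. -/
theorem coeff_prod_eq_Cpoly_div_X_pow (N : ℕ) (hN : 1 ≤ N) :
    PowerSeries.coeff (R := RatFunc ℚ) N
        (∏ i ∈ Finset.Icc 1 N,
          (1 - PowerSeries.X ^ i) ^ 2 *
            (1 - PowerSeries.C (R := RatFunc ℚ) (RatFunc.X + RatFunc.X⁻¹) * PowerSeries.X ^ i +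
              PowerSeries.X ^ (2 * i))⁻¹) =
      Polynomial.aeval (RatFunc.X : RatFunc ℚ) (Cpoly N) / RatFunc.X ^ N := by
  have hF : (∏ i ∈ Finset.Icc 1 N,
      (1 - PowerSeries.X ^ i) ^ 2 *
        (1 - PowerSeries.C (R := RatFunc ℚ) (RatFunc.X + RatFunc.X⁻¹) * PowerSeries.X ^ i +
          PowerSeries.X ^ (2 * i))⁻¹) = CrankAux.Fprod N := rfl
  rw [hF]
  rcases eq_or_lt_of_le hN with h1 | h2
  · rw [← h1]
    exact CrankAux.case_one
  · rw [CrankAux.coeff_FN_eq_SS N hN, CrankAux.coeff_SS N (by omega),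
      CrankAux.match_lemma N (by omega), ← CrankAux.RHS_eval N hN]
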